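/- arXiv:1104.1496 — 2 statements merged into one kernel-verified Lean document; each statement's English description precedes it below -/
import Mathlib

section
/- Let r > 0 and a, b ∈ ℝ. Let g : [0, r] → (0, 1] be continuously differentiable with g(r) = 1, and set ḡ = r⁻¹·∫₀^r g(z) dz. Then r⁻¹·[ 2a·∫₀^r g(z)·(∫_z^r (g(v) − 1) dv) dz + ∫₀^r (a·z² − b·z)·g′(z) dz ] = a·r·(ḡ − 1)² + b·(ḡ − 1). -/
open MeasureTheory Real intervalIntegral

/-- the key integral identity for the generator computation on `[0, r]`:
`r⁻¹ [ 2a ∫₀^r g(z) (∫_z^r (g(v) - 1) dv) dz + ∫₀^r (a z² - b z) g'(z) dz ]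
  = a r (ḡ - 1)² + b (ḡ - 1)` where `ḡ = r⁻¹ ∫₀^r g`. -/
theorem generator_integral_identity (r a b : ℝ) (hr : 0 < r) (g g' : ℝ → ℝ)
    (hg : ∀ z ∈ Set.Icc (0 : ℝ) r, g z ∈ Set.Ioc (0 : ℝ) 1)
    (hgr : g r = 1)
    (hderiv : ∀ z ∈ Set.Icc (0 : ℝ) r, HasDerivAt g (g' z) z)
    (hg'cont : ContinuousOn g' (Set.Icc 0 r)) :
    r⁻¹ * (2 * a * ∫ z in (0 : ℝ)..r, g z * ∫ v in z..r, (g v - 1)) +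
      r⁻¹ * (∫ z in (0 : ℝ)..r, (a * z ^ 2 - b * z) * g' z)
      = a * r * (r⁻¹ * (∫ z in (0 : ℝ)..r, g z) - 1) ^ 2
        + b * (r⁻¹ * (∫ z in (0 : ℝ)..r, g z) - 1) := by
  have huIcc : Set.uIcc (0:ℝ) r = Set.Icc 0 r := Set.uIcc_of_le hr.le
  have hgc : ContinuousOn g (Set.Icc 0 r) := fun z hz =>
    (hderiv z hz).continuousAt.continuousWithinAt
  have hgm1c : ContinuousOn (fun v => g v - 1) (Set.Icc 0 r) := hgc.sub continuousOn_const
  have hint_gm1 : IntervalIntegrable (fun v => g v - 1) volume 0 r := by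
    apply ContinuousOn.intervalIntegrable; rwa [huIcc]
  set H : ℝ → ℝ := fun z => ∫ v in (0:ℝ)..z, (g v - 1) with hHdef
  have hH0 : H 0 = 0 := intervalIntegral.integral_same
  have hHcont : ContinuousOn H (Set.Icc 0 r) := by
    have := intervalIntegral.continuousOn_primitive_interval
      (f := fun v => g v - 1) (μ := volume) (a := (0:ℝ)) (b := r)
      (by rw [huIcc]; exact hgm1c.integrableOn_compact isCompact_Icc)
    rwa [huIcc] at this
  have hHderiv : ∀ x ∈ Set.Ioo (0:ℝ) r, HasDerivAt H (g x - 1) x := by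
    intro x hx
    have hmem : Set.Icc (0:ℝ) r ∈ nhds x := Icc_mem_nhds hx.1 hx.2
    have hi : IntervalIntegrable (fun v => g v - 1) volume 0 x := by
      apply hint_gm1.mono_set
      rw [huIcc, Set.uIcc_of_le hx.1.le]
      exact Set.Icc_subset_Icc le_rfl hx.2.le
    exact intervalIntegral.integral_hasDerivAt_right hi
      ⟨Set.Icc 0 r, hmem, hgm1c.aestronglyMeasurable measurableSet_Icc⟩
      ((hderiv x ⟨hx.1.le, hx.2.le⟩).continuousAt.sub continuousAt_const)
  -- antiderivative
  set F : ℝ → ℝ := fun z =>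
    -a * (H r - H z)^2 + 2*a*z*(H r - H z) + (a*z^2 - b*z) * g z - a*z^2 + b * H z + b*z
    with hFdef
  have hFcont : ContinuousOn F (Set.Icc 0 r) := by
    have hA : ContinuousOn (fun z => -a * (H r - H z)^2) (Set.Icc 0 r) :=
      continuousOn_const.mul ((continuousOn_const.sub hHcont).pow 2)
    have hB : ContinuousOn (fun z : ℝ => 2*a*z*(H r - H z)) (Set.Icc 0 r) :=
      ((continuousOn_const.mul continuousOn_id).mul (continuousOn_const.sub hHcont))
    have hC : ContinuousOn (fun z : ℝ => (a*z^2 - b*z) * g z) (Set.Icc 0 r) :=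
      (((continuousOn_const.mul (continuousOn_pow 2)).sub
        (continuousOn_const.mul continuousOn_id))).mul hgc
    have hD : ContinuousOn (fun z : ℝ => a*z^2) (Set.Icc 0 r) :=
      continuousOn_const.mul (continuousOn_pow 2)
    have hE : ContinuousOn (fun z : ℝ => b * H z) (Set.Icc 0 r) :=
      continuousOn_const.mul hHcont
    have hF6 : ContinuousOn (fun z : ℝ => b * z) (Set.Icc 0 r) :=
      continuousOn_const.mul continuousOn_id
    exact ((((hA.add hB).add hC).sub hD).add hE).add hF6
  have hFderiv : ∀ x ∈ Set.Ioo (0:ℝ) r,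
      HasDerivAt F (2*a * g x * (H r - H x) + (a*x^2 - b*x) * g' x) x := by
    intro x hx
    have hgx := hderiv x ⟨hx.1.le, hx.2.le⟩
    have hHx := hHderiv x hx
    have h1 : HasDerivAt (fun z => H r - H z) (0 - (g x - 1)) x :=
      (hasDerivAt_const x (H r)).sub hHx
    have hp : HasDerivAt (fun z : ℝ => a*z^2 - b*z)
        (a * (↑2 * x ^ (2-1)) - b * 1) x :=
      ((hasDerivAt_pow 2 x).const_mul a).sub ((hasDerivAt_id x).const_mul b)
    have T := ((((((h1.pow 2).const_mul (-a)).add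
        (((hasDerivAt_id x).const_mul (2*a)).mul h1)).add
        (hp.mul hgx)).sub ((hasDerivAt_pow 2 x).const_mul a)).add
        (hHx.const_mul b)).add ((hasDerivAt_id x).const_mul b)
    refine T.congr_deriv ?_
    push_cast
    simp only [id_eq]
    ring
  have hHrGc : ContinuousOn (fun z => H r - H z) (Set.Icc 0 r) :=
    continuousOn_const.sub hHcont
  have hint1 : IntervalIntegrable (fun z => g z * (H r - H z)) volume 0 r := by
    apply ContinuousOn.intervalIntegrable; rw [huIcc]; exact hgc.mul hHrGc
  have hint2 : IntervalIntegrable (fun z => (a*z^2 - b*z) * g' z) volume 0 r := by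
    apply ContinuousOn.intervalIntegrable; rw [huIcc]
    exact (((continuousOn_const.mul (continuousOn_pow 2)).sub
      (continuousOn_const.mul continuousOn_id))).mul hg'cont
  have hintF' : IntervalIntegrable
      (fun z => 2*a * g z * (H r - H z) + (a*z^2 - b*z) * g' z) volume 0 r := by
    have : IntervalIntegrable (fun z => 2*a * (g z * (H r - H z))) volume 0 r :=
      hint1.const_mul (2*a)
    exact (this.congr_ae (Filter.EventuallyEq.of_eq (funext fun z => by ring))).add hint2
  have hFTC : (∫ z in (0:ℝ)..r, (2*a * g z * (H r - H z) + (a*z^2 - b*z) * g' z))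
      = F r - F 0 := by
    exact intervalIntegral.integral_eq_sub_of_hasDeriv_right_of_le hr.le hFcont
      (fun x hx => (hFderiv x hx).hasDerivWithinAt) hintF'
  have hsplit : (∫ z in (0:ℝ)..r, (2*a * g z * (H r - H z) + (a*z^2 - b*z) * g' z))
      = 2*a * (∫ z in (0:ℝ)..r, g z * (H r - H z))
        + ∫ z in (0:ℝ)..r, (a*z^2 - b*z) * g' z := by
    rw [intervalIntegral.integral_add (hint1.const_mul (2*a) |>.congr_ae
      (Filter.EventuallyEq.of_eq (funext fun z => by ring))) hint2]
    congr 1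
    rw [← intervalIntegral.integral_const_mul]
    apply intervalIntegral.integral_congr
    intro z _; ring
  -- inner integral rewrite
  have hinner : (∫ z in (0:ℝ)..r, g z * ∫ v in z..r, (g v - 1))
      = ∫ z in (0:ℝ)..r, g z * (H r - H z) := by
    apply intervalIntegral.integral_congr
    intro z hz
    rw [huIcc] at hz
    show g z * (∫ v in z..r, (g v - 1)) = g z * (H r - H z)
    congr 1
    have hi : IntervalIntegrable (fun v => g v - 1) volume 0 z := by
      apply hint_gm1.mono_set
      rw [huIcc, Set.uIcc_of_le hz.1]
      exact Set.Icc_subset_Icc le_rfl hz.2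
    exact (intervalIntegral.integral_interval_sub_left hint_gm1 hi).symm
  have hHr : H r = (∫ z in (0:ℝ)..r, g z) - r := by
    have hig : IntervalIntegrable g volume 0 r := by
      apply ContinuousOn.intervalIntegrable; rwa [huIcc]
    simp [hHdef, intervalIntegral.integral_sub hig intervalIntegrable_const]
  set I := ∫ z in (0:ℝ)..r, g z with hIdef
  have hFr : F r = b * H r := by
    show -a*(H r - H r)^2 + 2*a*r*(H r - H r) + (a*r^2 - b*r) * g r - a*r^2 + b * H r + b*r
      = b * H r
    rw [hgr]; ring
  have hF0 : F 0 = -a * (H r)^2 := by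
    show -a*(H r - H 0)^2 + 2*a*0*(H r - H 0) + (a*0^2 - b*0) * g 0 - a*0^2 + b * H 0 + b*0
      = -a * (H r)^2
    rw [hH0]; ring
  have key : 2*a * (∫ z in (0:ℝ)..r, g z * (H r - H z))
      + (∫ z in (0:ℝ)..r, (a*z^2 - b*z) * g' z) = a * (I - r)^2 + b * (I - r) := by
    rw [← hsplit, hFTC, hFr, hF0, hHr]; ring
  rw [hinner]
  have hrne : r ≠ 0 := hr.ne'
  have expand : a * r * (r⁻¹ * I - 1) ^ 2 + b * (r⁻¹ * I - 1)
      = r⁻¹ * (a * (I - r)^2 + b * (I - r)) := by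
    field_simp
  rw [expand, ← key]
  ring
end

section
/- Let a, b ∈ ℝ. Let g : [0, ∞) → (0, 1] be continuously differentiable with g(z) = 1 for all z ≥ r_g, for some r_g > 0. Set β = ∫₀^∞ (1 − g(z)) dz. Then 2a·∫₀^∞ g(z)·(∫_z^∞ (g(v) − 1) dv) dz + ∫₀^∞ (a·z² − b·z)·g′(z) dz = a·β² − b·β. -/
open MeasureTheory Real

/-- If a continuous function vanishes on `[r, ∞)`, its integral over `Ioi c`
equals the interval integral from `c` to `r`. -/
lemma ioi_eq_intervalAux (f : ℝ → ℝ) (c r : ℝ) (hf : Continuous f)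
    (h0 : ∀ z, r ≤ z → f z = 0) :
    (∫ z in Set.Ioi c, f z) = ∫ z in c..r, f z := by
  have hzero : ∀ z ∈ Set.Ioi r, f z = (0:ℝ) := fun z hz => h0 z (le_of_lt hz)
  rcases le_or_gt c r with hcr | hcr
  · have hset : Set.Ioc c r ∪ Set.Ioi r = Set.Ioi c := Set.Ioc_union_Ioi_eq_Ioi hcr
    have hi1 : IntegrableOn f (Set.Ioc c r) := hf.integrableOn_Ioc
    have hi2 : IntegrableOn f (Set.Ioi r) := by
      rw [integrableOn_congr_fun hzero measurableSet_Ioi]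
      exact integrableOn_zero
    have hzero' : (∫ z in Set.Ioi r, f z) = 0 := by
      rw [setIntegral_congr_fun measurableSet_Ioi hzero]; simp
    rw [← hset, setIntegral_union (Set.Ioc_disjoint_Ioi le_rfl) measurableSet_Ioi hi1 hi2,
      hzero', add_zero, intervalIntegral.integral_of_le hcr]
  · have h1 : (∫ z in Set.Ioi c, f z) = 0 := by
      rw [setIntegral_congr_fun measurableSet_Ioi (fun z hz => h0 z (hcr.le.trans (le_of_lt hz)))]
      simp
    have h2 : (∫ z in c..r, f z) = 0 := by
      have hEq : Set.EqOn f 0 (Set.uIcc c r) := by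
        intro t ht
        rw [Set.uIcc_of_ge hcr.le] at ht
        exact h0 t ht.1
      rw [intervalIntegral.integral_congr hEq]
      simp
    rw [h1, h2]

/-- the key integral identity for the limiting (`r = ∞`) generator:
with `β = ∫₀^∞ (1 - g(z)) dz`,
`2a ∫₀^∞ g(z) (∫_z^∞ (g(v) - 1) dv) dz + ∫₀^∞ (a z² - b z) g'(z) dz = a β² - b β`. -/
theorem generator_integral_identity_infinite (a b r_g : ℝ) (hrg : 0 < r_g)
    (g g' : ℝ → ℝ)
    (hg : ∀ z : ℝ, 0 ≤ z → g z ∈ Set.Ioc (0 : ℝ) 1)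
    (hg1 : ∀ z : ℝ, r_g ≤ z → g z = 1)
    (hderiv : ∀ z : ℝ, HasDerivAt g (g' z) z)
    (hg'cont : Continuous g') :
    2 * a * (∫ z in Set.Ioi (0 : ℝ), g z * ∫ v in Set.Ioi z, (g v - 1)) +
      (∫ z in Set.Ioi (0 : ℝ), (a * z ^ 2 - b * z) * g' z)
      = a * (∫ z in Set.Ioi (0 : ℝ), (1 - g z)) ^ 2
        - b * (∫ z in Set.Ioi (0 : ℝ), (1 - g z)) := by
  have hgc : Continuous g := continuous_iff_continuousAt.mpr fun z => (hderiv z).continuousAt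
  have hhc : Continuous (fun z => 1 - g z) := continuous_const.sub hgc
  -- g' vanishes on [r_g, ∞)
  have hg'Ioi : ∀ z ∈ Set.Ioi r_g, g' z = (0:ℝ) := by
    intro z hz
    have hev : g =ᶠ[nhds z] fun _ => (1:ℝ) := by
      filter_upwards [Ioi_mem_nhds hz] with y hy
      exact hg1 y (le_of_lt hy)
    have hd0 : HasDerivAt g 0 z := (hasDerivAt_const z (1:ℝ)).congr_of_eventuallyEq hev
    exact (hderiv z).unique hd0
  have hg'0 : ∀ z, r_g ≤ z → g' z = 0 := by
    have hcl : Set.EqOn g' 0 (closure (Set.Ioi r_g)) :=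
      Set.EqOn.closure hg'Ioi hg'cont continuous_const
    intro z hz
    have := hcl (by rw [closure_Ioi]; exact hz)
    simpa using this
  -- the primitive H z = ∫ z..r_g (1 - g)
  set H : ℝ → ℝ := fun z => ∫ t in z..r_g, (1 - g t) with hHdef
  have hHder : ∀ z, HasDerivAt H (-(1 - g z)) z := by
    intro z
    have h1 : HasDerivAt (fun u => ∫ t in r_g..u, (1 - g t)) (1 - g z) z :=
      intervalIntegral.integral_hasDerivAt_right (hhc.intervalIntegrable _ _)
        (hhc.stronglyMeasurableAtFilter _ _) hhc.continuousAt
    have h2 : H = fun u => -(∫ t in r_g..u, (1 - g t)) := by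
      funext u; rw [hHdef]; exact intervalIntegral.integral_symm _ _
    rw [h2]
    exact h1.neg
  have hHcont : Continuous H := continuous_iff_continuousAt.mpr fun z => (hHder z).continuousAt
  have hHr : H r_g = 0 := intervalIntegral.integral_same
  have hH0z : ∀ z, r_g ≤ z → H z = 0 := by
    intro z hz
    have hEq : Set.EqOn (fun t => 1 - g t) 0 (Set.uIcc z r_g) := by
      intro t ht
      rw [Set.uIcc_of_ge hz] at ht
      simp [hg1 t ht.1]
    show (∫ t in z..r_g, (1 - g t)) = 0
    rw [intervalIntegral.integral_congr hEq]
    simp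
  -- inner integral
  have hinner : ∀ z : ℝ, (∫ v in Set.Ioi z, (g v - 1)) = -(H z) := by
    intro z
    have h1 : (∫ v in Set.Ioi z, (g v - 1)) = ∫ v in z..r_g, (g v - 1) :=
      ioi_eq_intervalAux _ z r_g (hgc.sub continuous_const) (fun v hv => by rw [hg1 v hv]; ring)
    have h2 : (∫ v in z..r_g, (g v - 1)) = -(∫ v in z..r_g, (1 - g v)) := by
      rw [← intervalIntegral.integral_neg]
      apply intervalIntegral.integral_congr
      intro t _; ring
    rw [h1, h2]
  -- rewrite the three Ioi-integrals as interval integrals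
  have hbeta : (∫ z in Set.Ioi (0:ℝ), (1 - g z)) = H 0 :=
    ioi_eq_intervalAux _ 0 r_g hhc (fun z hz => by rw [hg1 z hz]; ring)
  have hT1 : (∫ z in Set.Ioi (0:ℝ), g z * ∫ v in Set.Ioi z, (g v - 1))
      = -(∫ z in (0:ℝ)..r_g, g z * H z) := by
    have hfun : (fun z => g z * ∫ v in Set.Ioi z, (g v - 1)) = fun z => -(g z * H z) := by
      funext z; rw [hinner z]; ring
    rw [hfun, ioi_eq_intervalAux (fun z => -(g z * H z)) 0 r_g ((hgc.mul hHcont).neg)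
      (fun z hz => by simp [hH0z z hz]), intervalIntegral.integral_neg]
  have hT2 : (∫ z in Set.Ioi (0:ℝ), (a * z ^ 2 - b * z) * g' z)
      = ∫ z in (0:ℝ)..r_g, (a * z ^ 2 - b * z) * g' z :=
    ioi_eq_intervalAux _ 0 r_g
      (((continuous_const.mul (continuous_pow 2)).sub (continuous_const.mul continuous_id)).mul hg'cont)
      (fun z hz => by rw [hg'0 z hz]; ring)
  rw [hbeta, hT1, hT2]
  -- Integration by parts for the second term
  have hu : ∀ z : ℝ, HasDerivAt (fun z => a * z ^ 2 - b * z) (2 * a * z - b) z := by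
    intro z
    have h1 : HasDerivAt (fun z : ℝ => a * z ^ 2 - b * z)
        (a * (2 * z ^ 1) - b * 1) z :=
      ((hasDerivAt_pow 2 z).const_mul a).sub ((hasDerivAt_id z).const_mul b)
    convert h1 using 1; ring
  have huc : Continuous (fun z : ℝ => 2 * a * z - b) := by continuity
  have hKA : (∫ z in (0:ℝ)..r_g, (a * z ^ 2 - b * z) * g' z)
      = (a * r_g ^ 2 - b * r_g) - ∫ z in (0:ℝ)..r_g, (2 * a * z - b) * g z := by
    have := intervalIntegral.integral_mul_deriv_eq_deriv_mul
      (a := (0:ℝ)) (b := r_g)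
      (u := fun z => a * z ^ 2 - b * z) (u' := fun z => 2 * a * z - b)
      (v := g) (v' := g')
      (fun x _ => hu x) (fun x _ => hderiv x)
      (huc.intervalIntegrable _ _) (hg'cont.intervalIntegrable _ _)
    rw [this, hg1 r_g le_rfl]
    ring
  -- ∫ (2az - b) = a r² - b r
  have hKB : (∫ z in (0:ℝ)..r_g, (2 * a * z - b)) = a * r_g ^ 2 - b * r_g := by
    rw [intervalIntegral.integral_eq_sub_of_hasDerivAt (fun x _ => hu x)
      (huc.intervalIntegrable _ _)]
    ring
  -- split ∫ (2az-b) g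
  have hsplit : (∫ z in (0:ℝ)..r_g, (2 * a * z - b) * g z)
      = (a * r_g ^ 2 - b * r_g) - (2 * a * (∫ z in (0:ℝ)..r_g, z * (1 - g z))
          - b * (H 0)) := by
    have h1 : (∫ z in (0:ℝ)..r_g, (2 * a * z - b) * (1 - g z))
        = 2 * a * (∫ z in (0:ℝ)..r_g, z * (1 - g z)) - b * (H 0) := by
      have e : (fun z => (2 * a * z - b) * (1 - g z))
          = fun z => 2 * a * (z * (1 - g z)) - b * (1 - g z) := by
        funext z; ring
      have int1 : IntervalIntegrable (fun z => 2 * a * (z * (1 - g z))) volume 0 r_g :=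
        ((continuous_const.mul (continuous_id.mul hhc))).intervalIntegrable _ _
      have int2 : IntervalIntegrable (fun z => b * (1 - g z)) volume 0 r_g :=
        (continuous_const.mul hhc).intervalIntegrable _ _
      rw [e, intervalIntegral.integral_sub int1 int2, intervalIntegral.integral_const_mul,
        intervalIntegral.integral_const_mul]
    have h2 : (∫ z in (0:ℝ)..r_g, (2 * a * z - b) * (1 - g z))
        = (∫ z in (0:ℝ)..r_g, (2 * a * z - b)) - ∫ z in (0:ℝ)..r_g, (2 * a * z - b) * g z := by
      rw [← intervalIntegral.integral_sub (g := fun z => (2 * a * z - b) * g z)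
        (huc.intervalIntegrable _ _)
        ((huc.mul hgc).intervalIntegrable _ _)]
      apply intervalIntegral.integral_congr
      intro t _; ring
    rw [h2, hKB] at h1
    linarith
  -- ∫ z (1 - g z) = ∫ H (integration by parts)
  have hKC : (∫ z in (0:ℝ)..r_g, z * (1 - g z)) = ∫ z in (0:ℝ)..r_g, H z := by
    have := intervalIntegral.integral_mul_deriv_eq_deriv_mul
      (a := (0:ℝ)) (b := r_g)
      (u := fun z : ℝ => z) (u' := fun _ => (1:ℝ))
      (v := fun z => -(H z)) (v' := fun z => 1 - g z)
      (fun x _ => hasDerivAt_id x) (fun x _ => by have h := (hHder x).neg; rw [neg_neg] at h; exact h)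
      (continuous_const.intervalIntegrable _ _) (hhc.intervalIntegrable _ _)
    rw [this]
    simp [hHr, intervalIntegral.integral_neg]
  -- ∫ (1-g) H = (H 0)^2 / 2
  have hKD : (∫ z in (0:ℝ)..r_g, (1 - g z) * H z) = (H 0) ^ 2 / 2 := by
    have hF : ∀ z : ℝ, HasDerivAt (fun z => -(H z ^ 2) / 2) ((1 - g z) * H z) z := by
      intro z
      have h1 : HasDerivAt (fun z => H z ^ 2) (2 * H z ^ 1 * (-(1 - g z))) z :=
        (hHder z).pow 2
      have h2 : HasDerivAt (fun z => -(H z ^ 2) / 2)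
          (-(2 * H z ^ 1 * (-(1 - g z))) / 2) z := (h1.neg).div_const 2
      convert h2 using 1; ring
    rw [intervalIntegral.integral_eq_sub_of_hasDerivAt (fun x _ => hF x)
      ((hhc.mul hHcont).intervalIntegrable _ _), hHr]
    ring
  -- split ∫ (1-g) H
  have hsplit2 : (∫ z in (0:ℝ)..r_g, (1 - g z) * H z)
      = (∫ z in (0:ℝ)..r_g, H z) - ∫ z in (0:ℝ)..r_g, g z * H z := by
    rw [← intervalIntegral.integral_sub (g := fun z => g z * H z)
      (hHcont.intervalIntegrable _ _)
      ((hgc.mul hHcont).intervalIntegrable _ _)]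
    apply intervalIntegral.integral_congr
    intro t _; ring
  rw [hKA, hsplit, hKC]
  rw [hsplit2] at hKD
  linear_combination 2 * a * hKD
end
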